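/- arXiv:2009.04781 — 5 statements merged into one kernel-verified Lean document; each statement's English description precedes it below -/
import Mathlib

section
/- Let a₁ < a₂ and b = 𝟙_{[a₁,a₂]}. Then for every s > 0 and every y, z ∈ ℝ, s^(−1/2) · ∫_{ℝ} |b(x+y+z) − b(x+y)|² e^(−x²/s) dx ≤ 2 s^(−1/2) |z|; in particular b satisfies assumption (A2) with α = 1 and φ(s) = 2 s^(−1/2). -/
open MeasureTheory

theorem stmt4 (a₁ a₂ : ℝ) (h : a₁ < a₂) (b : ℝ → ℝ)
    (hb : b = Set.indicator (Set.Icc a₁ a₂) 1)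
    (s : ℝ) (hs : 0 < s) (y z : ℝ) :
    s ^ (-(1:ℝ)/2) * ∫ x : ℝ, |b (x + y + z) - b (x + y)| ^ 2 * Real.exp (-x ^ 2 / s)
      ≤ 2 * s ^ (-(1:ℝ)/2) * |z| := by
  have hsp : (0:ℝ) < s ^ (-(1:ℝ)/2) := Real.rpow_pos_of_pos hs _
  set S : Set ℝ := Set.uIcc (a₁ - y - z) (a₁ - y) ∪ Set.uIcc (a₂ - y - z) (a₂ - y) with hS
  have hSmeas : MeasurableSet S := measurableSet_uIcc.union measurableSet_uIcc
  have hSvol : volume S ≤ ENNReal.ofReal (2 * |z|) := by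
    calc volume S ≤ volume (Set.uIcc (a₁ - y - z) (a₁ - y))
          + volume (Set.uIcc (a₂ - y - z) (a₂ - y)) := measure_union_le _ _
      _ = ENNReal.ofReal |z| + ENNReal.ofReal |z| := by
          rw [Real.volume_interval, Real.volume_interval]
          have h1 : a₁ - y - (a₁ - y - z) = z := by ring
          have h2 : a₂ - y - (a₂ - y - z) = z := by ring
          rw [h1, h2]
      _ ≤ ENNReal.ofReal (2 * |z|) := by
          rw [← ENNReal.ofReal_add (abs_nonneg z) (abs_nonneg z)]
          apply ENNReal.ofReal_le_ofReal; linarith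
  have hSfin : volume S < ⊤ := hSvol.trans_lt ENNReal.ofReal_lt_top
  have hpt : ∀ x : ℝ, |b (x + y + z) - b (x + y)| ^ 2 * Real.exp (-x ^ 2 / s)
      ≤ S.indicator (fun _ => (1:ℝ)) x := by
    intro x
    have hexp : Real.exp (-x ^ 2 / s) ≤ 1 := by
      rw [Real.exp_le_one_iff]
      exact div_nonpos_of_nonpos_of_nonneg (neg_nonpos.mpr (sq_nonneg x)) hs.le
    have hexp0 : 0 < Real.exp (-x ^ 2 / s) := Real.exp_pos _
    subst hb
    by_cases h1 : x + y + z ∈ Set.Icc a₁ a₂ <;> by_cases h2 : x + y ∈ Set.Icc a₁ a₂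
    · simp only [Set.indicator_of_mem h1, Set.indicator_of_mem h2, Pi.one_apply]
      simp only [sub_self, abs_zero]
      exact le_trans (le_of_eq (by norm_num))
        (Set.indicator_nonneg (fun _ _ => zero_le_one) x)
    · have hxS : x ∈ S := by
        simp only [Set.mem_Icc, not_and, not_le] at h1 h2
        simp only [hS, Set.mem_union, Set.mem_uIcc]
        rcases lt_or_ge (x + y) a₁ with hlt | hge
        · left; left; constructor <;> linarith [h1.1, h1.2]
        · right; right
          have := h2 hge
          constructor <;> linarith [h1.1, h1.2]
      rw [Set.indicator_of_mem h1, Set.indicator_of_notMem h2,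
        Set.indicator_of_mem hxS, Pi.one_apply]
      simp only [sub_zero, abs_one, one_pow, one_mul]
      exact hexp
    · have hxS : x ∈ S := by
        simp only [Set.mem_Icc, not_and, not_le] at h1 h2
        simp only [hS, Set.mem_union, Set.mem_uIcc]
        rcases lt_or_ge (x + y + z) a₁ with hlt | hge
        · left; right; constructor <;> linarith [h2.1, h2.2]
        · right; left
          have := h1 hge
          constructor <;> linarith [h2.1, h2.2]
      rw [Set.indicator_of_notMem h1, Set.indicator_of_mem h2,
        Set.indicator_of_mem hxS, Pi.one_apply]
      simp only [zero_sub, abs_neg, abs_one, one_pow, one_mul]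
      exact hexp
    · simp only [Set.indicator_of_notMem h1, Set.indicator_of_notMem h2]
      simp only [sub_self, abs_zero]
      exact le_trans (le_of_eq (by norm_num))
        (Set.indicator_nonneg (fun _ _ => zero_le_one) x)
  have hbmeas : Measurable b := by
    rw [hb]; exact measurable_one.indicator measurableSet_Icc
  have hg_int : Integrable (S.indicator (fun _ => (1:ℝ))) := by
    rw [integrable_indicator_iff hSmeas]
    exact integrableOn_const hSfin.ne
  have hfmeas : Measurable fun x : ℝ =>
      |b (x + y + z) - b (x + y)| ^ 2 * Real.exp (-x ^ 2 / s) := by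
    fun_prop
  have hf_int : Integrable fun x : ℝ =>
      |b (x + y + z) - b (x + y)| ^ 2 * Real.exp (-x ^ 2 / s) := by
    apply hg_int.mono' hfmeas.aestronglyMeasurable
    filter_upwards with x
    rw [Real.norm_eq_abs, abs_of_nonneg (by positivity)]
    exact hpt x
  have hint : (∫ x : ℝ, |b (x + y + z) - b (x + y)| ^ 2 * Real.exp (-x ^ 2 / s))
      ≤ 2 * |z| := by
    calc (∫ x : ℝ, |b (x + y + z) - b (x + y)| ^ 2 * Real.exp (-x ^ 2 / s))
        ≤ ∫ x : ℝ, S.indicator (fun _ => (1:ℝ)) x := integral_mono hf_int hg_int hpt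
      _ = (volume S).toReal := by rw [integral_indicator_const _ hSmeas]; simp [measureReal_def]
      _ ≤ 2 * |z| := ENNReal.toReal_le_of_le_ofReal (by positivity) hSvol
  calc s ^ (-(1:ℝ)/2) * ∫ x : ℝ, |b (x + y + z) - b (x + y)| ^ 2 * Real.exp (-x ^ 2 / s)
      ≤ s ^ (-(1:ℝ)/2) * (2 * |z|) := mul_le_mul_of_nonneg_left hint hsp.le
    _ = 2 * s ^ (-(1:ℝ)/2) * |z| := by ring
end

section
/- Let A, B be symmetric positive semidefinite d×d real matrices with λ̌₀ I ≤ A, B ≤ λ̂₀ I (as quadratic forms) for 0 < λ̌₀ ≤ λ̂₀. If moreover ‖A^{1/2} − B^{1/2}‖_{HS} ≤ L₀ δ (coming from σ Lipschitz), then |det A − det B| ≤ 2 d^{d/2+1} d! λ̂₀^{d−1/2} L₀ δ. -/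
open Matrix Finset

lemma det_hadamard {d : ℕ} (m : Fin d → Fin d → ℝ) :
    ‖Matrix.detRowAlternating (R := ℝ) (n := Fin d) m‖ ≤ (Nat.factorial d : ℝ) * ∏ i, ‖m i‖ := by
  have : Matrix.detRowAlternating (R := ℝ) (n := Fin d) m = Matrix.det m := rfl
  rw [this, show Matrix.det m = ∑ σ : Equiv.Perm (Fin d), Equiv.Perm.sign σ • ∏ i, m (σ i) i from
    Matrix.det_apply _]
  calc ‖∑ σ : Equiv.Perm (Fin d), Equiv.Perm.sign σ • ∏ i, m (σ i) i‖
      ≤ ∑ σ : Equiv.Perm (Fin d), ‖Equiv.Perm.sign σ • ∏ i, m (σ i) i‖ := norm_sum_le _ _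
    _ ≤ ∑ σ : Equiv.Perm (Fin d), ∏ i, ‖m i‖ := by
        apply Finset.sum_le_sum
        intro σ _
        have h1 : ‖Equiv.Perm.sign σ • ∏ i, m (σ i) i‖ = ‖∏ i, m (σ i) i‖ := by
          rcases Int.units_eq_one_or (Equiv.Perm.sign σ) with h | h <;> simp [h, Units.smul_def]
        rw [h1]
        have h2 : ‖∏ i, m (σ i) i‖ ≤ ∏ i, ‖m (σ i)‖ := by
          rw [Real.norm_eq_abs, Finset.abs_prod]
          exact Finset.prod_le_prod (fun _ _ => abs_nonneg _)
            (fun i _ => by simpa using norm_le_pi_norm (m (σ i)) i)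
        calc ‖∏ i, m (σ i) i‖ ≤ ∏ i, ‖m (σ i)‖ := h2
          _ = ∏ i, ‖m i‖ := Equiv.prod_comp σ (fun i => ‖m i‖)
    _ = (Nat.factorial d : ℝ) * ∏ i, ‖m i‖ := by
        rw [Finset.sum_const, Finset.card_univ, Fintype.card_perm, Fintype.card_fin,
          nsmul_eq_mul]

lemma det_sub_det_le {d : ℕ} (M N : Matrix (Fin d) (Fin d) ℝ) {K ε : ℝ}
    (hK : 0 ≤ K) (hε : 0 ≤ ε)
    (hM : ∀ i j, |M i j| ≤ K) (hN : ∀ i j, |N i j| ≤ K)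
    (hMN : ∀ i j, |M i j - N i j| ≤ ε) :
    |M.det - N.det| ≤ (Nat.factorial d : ℝ) * ((d : ℝ) * (ε * K ^ (d - 1))) := by
  have hfact : (0:ℝ) ≤ (Nat.factorial d : ℝ) := Nat.cast_nonneg _
  have key := (Matrix.detRowAlternating (R := ℝ) (n := Fin d)).toMultilinearMap.norm_image_sub_le_of_bound'
    hfact (fun m => det_hadamard m) M N
  have hdet : ∀ P : Matrix (Fin d) (Fin d) ℝ,
      (Matrix.detRowAlternating (R := ℝ) (n := Fin d)).toMultilinearMap P = P.det := fun _ => rfl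
  rw [hdet, hdet] at key
  rw [← Real.norm_eq_abs]
  refine key.trans ?_
  have hterm : ∀ i : Fin d,
      (∏ j, if j = i then ‖M i - N i‖ else max ‖M j‖ ‖N j‖) ≤ ε * K ^ (d - 1) := by
    intro i
    rw [← Finset.prod_erase_mul _ _ (Finset.mem_univ i), if_pos rfl]
    have h1 : (∏ j ∈ Finset.univ.erase i, if j = i then ‖M i - N i‖ else max ‖M j‖ ‖N j‖)
        ≤ K ^ (d - 1) := by
      have : (∏ j ∈ Finset.univ.erase i, if j = i then ‖M i - N i‖ else max ‖M j‖ ‖N j‖)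
          ≤ ∏ _j ∈ Finset.univ.erase i, K := by
        apply Finset.prod_le_prod
        · intro j _
          split <;> positivity
        · intro j hj
          rw [if_neg (Finset.ne_of_mem_erase hj)]
          have hMj : ‖M j‖ ≤ K := (pi_norm_le_iff_of_nonneg hK).2 fun k => hM j k
          have hNj : ‖N j‖ ≤ K := (pi_norm_le_iff_of_nonneg hK).2 fun k => hN j k
          exact max_le hMj hNj
      refine this.trans_eq ?_
      rw [Finset.prod_const, Finset.card_erase_of_mem (Finset.mem_univ i),
        Finset.card_univ, Fintype.card_fin]
    have h2 : ‖M i - N i‖ ≤ ε := (pi_norm_le_iff_of_nonneg hε).2 fun k => hMN i k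
    calc (∏ j ∈ Finset.univ.erase i, if j = i then ‖M i - N i‖ else max ‖M j‖ ‖N j‖) * ‖M i - N i‖
        ≤ K ^ (d-1) * ε := by
          apply mul_le_mul h1 h2 (norm_nonneg _)
          positivity
      _ = ε * K ^ (d-1) := by ring
  gcongr
  calc (∑ i, ∏ j, if j = i then ‖M i - N i‖ else max ‖M j‖ ‖N j‖)
      ≤ ∑ _i : Fin d, ε * K ^ (d-1) := Finset.sum_le_sum fun i _ => hterm i
    _ = (d : ℝ) * (ε * K ^ (d-1)) := by simp [mul_comm]

/-- The Hilbert–Schmidt (Frobenius) norm of a real matrix. -/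
noncomputable def HSnorm {d : ℕ} (A : Matrix (Fin d) (Fin d) ℝ) : ℝ :=
  Real.sqrt (∑ i, ∑ j, (A i j) ^ 2)

open scoped ComplexOrder in
/-- The square root of a positive semidefinite matrix, as defined in the older Mathlib
(`Matrix.PosSemidef.sqrt`, since removed). -/
noncomputable def Matrix.PosSemidef.sqrt {n : Type*} [Fintype n] [DecidableEq n]
    {𝕜 : Type*} [RCLike 𝕜] {A : Matrix n n 𝕜} (hA : A.PosSemidef) : Matrix n n 𝕜 :=
  hA.1.eigenvectorUnitary.1 * diagonal ((↑) ∘ (√·) ∘ hA.1.eigenvalues) *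
  (star hA.1.eigenvectorUnitary : Matrix n n 𝕜)

lemma sqrt_mul_self_old {d : ℕ} {A : Matrix (Fin d) (Fin d) ℝ} (hA : A.PosSemidef) :
    hA.sqrt * hA.sqrt = A := by
  have hU : (star hA.1.eigenvectorUnitary : Matrix (Fin d) (Fin d) ℝ) * hA.1.eigenvectorUnitary.1 = 1 :=
    Unitary.coe_star_mul_self _
  have hD : diagonal ((↑) ∘ (√·) ∘ hA.1.eigenvalues) * diagonal ((↑) ∘ (√·) ∘ hA.1.eigenvalues)
      = diagonal (RCLike.ofReal ∘ hA.1.eigenvalues : Fin d → ℝ) := by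
    rw [diagonal_mul_diagonal]
    congr 1; funext i
    simp [Real.mul_self_sqrt (hA.eigenvalues_nonneg i)]
  conv_rhs => rw [hA.1.spectral_theorem, Unitary.conjStarAlgAut_apply]
  unfold Matrix.PosSemidef.sqrt
  rw [← hD]
  simp only [Matrix.mul_assoc]
  rw [← Matrix.mul_assoc (star _ : Matrix _ _ ℝ), hU, Matrix.one_mul]
  rfl

lemma isHermitian_sqrt_old {d : ℕ} {A : Matrix (Fin d) (Fin d) ℝ} (hA : A.PosSemidef) :
    hA.sqrt.IsHermitian := by
  unfold Matrix.PosSemidef.sqrt IsHermitian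
  rw [conjTranspose_mul, conjTranspose_mul, star_eq_conjTranspose, conjTranspose_conjTranspose,
    diagonal_conjTranspose, Matrix.mul_assoc]
  congr 3

theorem stmt14 (d : ℕ) (A B : Matrix (Fin d) (Fin d) ℝ)
    (hA : A.PosSemidef) (hB : B.PosSemidef)
    (lam0 lamh L0 δ : ℝ) (hlam0 : 0 < lam0) (hle : lam0 ≤ lamh)
    (hL0 : 0 ≤ L0) (hδ : 0 ≤ δ)
    (hAq : ∀ ξ : Fin d → ℝ,
      lam0 * (∑ i, ξ i ^ 2) ≤ ξ ⬝ᵥ A.mulVec ξ ∧ ξ ⬝ᵥ A.mulVec ξ ≤ lamh * (∑ i, ξ i ^ 2))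
    (hBq : ∀ ξ : Fin d → ℝ,
      lam0 * (∑ i, ξ i ^ 2) ≤ ξ ⬝ᵥ B.mulVec ξ ∧ ξ ⬝ᵥ B.mulVec ξ ≤ lamh * (∑ i, ξ i ^ 2))
    (hsqrt : HSnorm (hA.sqrt - hB.sqrt) ≤ L0 * δ) :
    |A.det - B.det| ≤ 2 * (d:ℝ) ^ ((d:ℝ)/2 + 1) * (Nat.factorial d) *
      lamh ^ ((d:ℝ) - 1/2) * L0 * δ := by
  have hlamh : 0 < lamh := lt_of_lt_of_le hlam0 hle
  rcases Nat.eq_zero_or_pos d with hd0 | hd1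
  · subst hd0
    have : A.det = 1 := Matrix.det_isEmpty
    have hB1 : B.det = 1 := Matrix.det_isEmpty
    rw [this, hB1]
    simp only [sub_self, abs_zero, Nat.cast_zero]
    have : (0:ℝ) ^ ((0:ℝ)/2 + 1) = 0 := by
      rw [Real.zero_rpow (by norm_num)]
    rw [this]
    positivity
  -- notation
  set S := hA.sqrt with hSdef
  set T := hB.sqrt with hTdef
  have hSsym : ∀ i j, S i j = S j i := by
    intro i j
    have h := (isHermitian_sqrt_old hA).apply i j
    simp only [star_trivial] at h
    exact h.symm
  have hTsym : ∀ i j, T i j = T j i := by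
    intro i j
    have h := (isHermitian_sqrt_old hB).apply i j
    simp only [star_trivial] at h
    exact h.symm
  have hSS : S * S = A := sqrt_mul_self_old hA
  have hTT : T * T = B := sqrt_mul_self_old hB
  -- diagonal bounds from the quadratic form
  have hdiag : ∀ (M : Matrix (Fin d) (Fin d) ℝ),
      (∀ ξ : Fin d → ℝ, ξ ⬝ᵥ M.mulVec ξ ≤ lamh * (∑ i, ξ i ^ 2)) → ∀ i, M i i ≤ lamh := by
    intro M hq i
    have h := hq (Pi.single i 1)
    have h1 : (∑ k, (Pi.single i 1 : Fin d → ℝ) k ^ 2) = 1 := by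
      simp [Pi.single_apply]
    have h2 : (Pi.single i 1 : Fin d → ℝ) ⬝ᵥ M.mulVec (Pi.single i 1) = M i i := by
      simp [dotProduct, Matrix.mulVec, Pi.single_apply, Finset.mul_sum, mul_ite]
    rw [h1, h2, mul_one] at h
    exact h
  have hdiagA : ∀ i, A i i ≤ lamh := hdiag A (fun ξ => (hAq ξ).2)
  have hdiagB : ∀ i, B i i ≤ lamh := hdiag B (fun ξ => (hBq ξ).2)
  -- row sums of squares of S and T
  have hSrow : ∀ i, (∑ k, S i k ^ 2) ≤ lamh := by
    intro i
    have : (∑ k, S i k ^ 2) = A i i := by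
      rw [← hSS, Matrix.mul_apply]
      exact Finset.sum_congr rfl fun k _ => by rw [sq, hSsym k i]
    rw [this]; exact hdiagA i
  have hTrow : ∀ i, (∑ k, T i k ^ 2) ≤ lamh := by
    intro i
    have : (∑ k, T i k ^ 2) = B i i := by
      rw [← hTT, Matrix.mul_apply]
      exact Finset.sum_congr rfl fun k _ => by rw [sq, hTsym k i]
    rw [this]; exact hdiagB i
  -- HS norm control on S - T, rows and columns
  have hDtot : (∑ i, ∑ j, ((S - T) i j) ^ 2) ≤ (L0 * δ) ^ 2 := by
    have hnn : (0:ℝ) ≤ ∑ i, ∑ j, ((S - T) i j) ^ 2 := by positivity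
    have := Real.sq_sqrt hnn
    calc (∑ i, ∑ j, ((S - T) i j) ^ 2) = (HSnorm (S - T)) ^ 2 := by
          rw [HSnorm, Real.sq_sqrt hnn]
      _ ≤ (L0 * δ) ^ 2 := by
          apply pow_le_pow_left₀ (Real.sqrt_nonneg _) hsqrt
  have hDrow : ∀ i, (∑ k, ((S - T) i k) ^ 2) ≤ (L0 * δ) ^ 2 := by
    intro i
    refine le_trans ?_ hDtot
    exact Finset.single_le_sum (f := fun i => ∑ k, ((S - T) i k) ^ 2)
      (fun i _ => by positivity) (Finset.mem_univ i)
  have hDcol : ∀ j, (∑ k, ((S - T) k j) ^ 2) ≤ (L0 * δ) ^ 2 := by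
    intro j
    refine le_trans ?_ hDtot
    calc (∑ k, ((S - T) k j) ^ 2) ≤ ∑ k, ∑ j', ((S - T) k j') ^ 2 := by
          apply Finset.sum_le_sum
          intro k _
          exact Finset.single_le_sum (f := fun j' => ((S - T) k j') ^ 2)
            (fun _ _ => by positivity) (Finset.mem_univ j)
      _ = _ := rfl
  -- Cauchy–Schwarz helper
  have hCS : ∀ (f g : Fin d → ℝ) (Cf Cg : ℝ), 0 ≤ Cf → 0 ≤ Cg →
      (∑ k, f k ^ 2) ≤ Cf ^ 2 → (∑ k, g k ^ 2) ≤ Cg ^ 2 →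
      |∑ k, f k * g k| ≤ Cf * Cg := by
    intro f g Cf Cg hCf hCg hf hg
    have h1 : (∑ k, f k * g k) ^ 2 ≤ (∑ k, f k ^ 2) * (∑ k, g k ^ 2) :=
      Finset.sum_mul_sq_le_sq_mul_sq _ _ _
    have h2 : (∑ k, f k * g k) ^ 2 ≤ (Cf * Cg) ^ 2 := by
      calc (∑ k, f k * g k) ^ 2 ≤ (∑ k, f k ^ 2) * (∑ k, g k ^ 2) := h1
        _ ≤ Cf ^ 2 * Cg ^ 2 := by
            apply mul_le_mul hf hg (by positivity) (by positivity)
        _ = (Cf * Cg) ^ 2 := by ring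
    calc |∑ k, f k * g k| = Real.sqrt ((∑ k, f k * g k) ^ 2) := (Real.sqrt_sq_eq_abs _).symm
      _ ≤ Real.sqrt ((Cf * Cg) ^ 2) := Real.sqrt_le_sqrt h2
      _ = Cf * Cg := by rw [Real.sqrt_sq (by positivity)]
  have hsqlamh : Real.sqrt lamh ^ 2 = lamh := Real.sq_sqrt hlamh.le
  -- entry bounds for A and B
  have hAe : ∀ i j, |A i j| ≤ lamh := by
    intro i j
    have hAij : A i j = ∑ k, S i k * S j k := by
      rw [← hSS, Matrix.mul_apply]
      exact Finset.sum_congr rfl fun k _ => by rw [hSsym k j]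
    rw [hAij]
    have := hCS (fun k => S i k) (fun k => S j k) (Real.sqrt lamh) (Real.sqrt lamh)
      (Real.sqrt_nonneg _) (Real.sqrt_nonneg _)
      (by rw [hsqlamh]; exact hSrow i) (by rw [hsqlamh]; exact hSrow j)
    calc |∑ k, S i k * S j k| ≤ Real.sqrt lamh * Real.sqrt lamh := this
      _ = lamh := Real.mul_self_sqrt hlamh.le
  have hBe : ∀ i j, |B i j| ≤ lamh := by
    intro i j
    have hBij : B i j = ∑ k, T i k * T j k := by
      rw [← hTT, Matrix.mul_apply]
      exact Finset.sum_congr rfl fun k _ => by rw [hTsym k j]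
    rw [hBij]
    have := hCS (fun k => T i k) (fun k => T j k) (Real.sqrt lamh) (Real.sqrt lamh)
      (Real.sqrt_nonneg _) (Real.sqrt_nonneg _)
      (by rw [hsqlamh]; exact hTrow i) (by rw [hsqlamh]; exact hTrow j)
    calc |∑ k, T i k * T j k| ≤ Real.sqrt lamh * Real.sqrt lamh := this
      _ = lamh := Real.mul_self_sqrt hlamh.le
  -- entry bound for A - B
  have hABmat : A - B = S * (S - T) + (S - T) * T := by
    rw [← hSS, ← hTT]; noncomm_ring
  have hABe : ∀ i j, |A i j - B i j| ≤ 2 * Real.sqrt lamh * (L0 * δ) := by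
    intro i j
    have h1 : A i j - B i j = (∑ k, S i k * (S - T) k j) + (∑ k, (S - T) i k * T k j) := by
      have := congrFun (congrFun hABmat i) j
      simpa [Matrix.sub_apply, Matrix.add_apply, Matrix.mul_apply] using this
    rw [h1]
    have e1 : |∑ k, S i k * (S - T) k j| ≤ Real.sqrt lamh * (L0 * δ) :=
      hCS (fun k => S i k) (fun k => (S - T) k j) (Real.sqrt lamh) (L0 * δ)
        (Real.sqrt_nonneg _) (by positivity)
        (by rw [hsqlamh]; exact hSrow i) (hDcol j)
    have e2 : |∑ k, (S - T) i k * T k j| ≤ (L0 * δ) * Real.sqrt lamh := by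
      refine hCS (fun k => (S - T) i k) (fun k => T k j) (L0 * δ) (Real.sqrt lamh)
        (by positivity) (Real.sqrt_nonneg _) (hDrow i) ?_
      rw [hsqlamh]
      calc (∑ k, T k j ^ 2) = ∑ k, T j k ^ 2 :=
            Finset.sum_congr rfl fun k _ => by rw [hTsym k j]
        _ ≤ lamh := hTrow j
    calc |(∑ k, S i k * (S - T) k j) + (∑ k, (S - T) i k * T k j)|
        ≤ |∑ k, S i k * (S - T) k j| + |∑ k, (S - T) i k * T k j| := abs_add_le _ _
      _ ≤ Real.sqrt lamh * (L0 * δ) + (L0 * δ) * Real.sqrt lamh := add_le_add e1 e2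
      _ = 2 * Real.sqrt lamh * (L0 * δ) := by ring
  -- apply the determinant Lipschitz bound
  have key := det_sub_det_le A B hlamh.le (by positivity : (0:ℝ) ≤ 2 * Real.sqrt lamh * (L0 * δ))
    hAe hBe hABe
  refine key.trans ?_
  -- arithmetic: d! * (d * (2√lamh L0δ * lamh^{d-1})) ≤ 2 d^{d/2+1} d! lamh^{d-1/2} L0 δ
  have hpow : lamh ^ (d - 1) * Real.sqrt lamh = lamh ^ ((d:ℝ) - 1/2) := by
    have h1 : lamh ^ (d - 1) = lamh ^ (((d - 1 : ℕ) : ℝ)) := (Real.rpow_natCast _ _).symm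
    have h2 : Real.sqrt lamh = lamh ^ ((1:ℝ)/2) := Real.sqrt_eq_rpow lamh
    rw [h1, h2, ← Real.rpow_add hlamh]
    congr 1
    have : ((d - 1 : ℕ) : ℝ) = (d : ℝ) - 1 := by
      rw [Nat.cast_sub hd1]; norm_num
    rw [this]; ring
  have hdd : (d : ℝ) ≤ (d : ℝ) ^ ((d:ℝ)/2 + 1) := by
    have h1 : (1:ℝ) ≤ (d:ℝ) := by exact_mod_cast hd1
    calc (d:ℝ) = (d:ℝ) ^ (1:ℝ) := (Real.rpow_one _).symm
      _ ≤ (d:ℝ) ^ ((d:ℝ)/2 + 1) := by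
          apply Real.rpow_le_rpow_of_exponent_le h1
          have : (1:ℝ) ≤ (d:ℝ) := h1
          nlinarith
  have hrpos : (0:ℝ) ≤ lamh ^ ((d:ℝ) - 1/2) := le_of_lt (Real.rpow_pos_of_pos hlamh _)
  calc (Nat.factorial d : ℝ) * ((d:ℝ) * (2 * Real.sqrt lamh * (L0 * δ) * lamh ^ (d - 1)))
      = 2 * (d:ℝ) * (Nat.factorial d : ℝ) * (lamh ^ (d-1) * Real.sqrt lamh) * L0 * δ := by
        ring
    _ = 2 * (d:ℝ) * (Nat.factorial d : ℝ) * lamh ^ ((d:ℝ) - 1/2) * L0 * δ := by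
        rw [hpow]
    _ ≤ 2 * (d:ℝ) ^ ((d:ℝ)/2 + 1) * (Nat.factorial d : ℝ) * lamh ^ ((d:ℝ) - 1/2) * L0 * δ := by
        have hf : (0:ℝ) ≤ (Nat.factorial d : ℝ) := Nat.cast_nonneg _
        gcongr
end

section
/- Khasminskii's lemma (abstract form): Let (A_t) be a nonnegative nondecreasing adapted process with A₀ = 0 such that E(A_t − A_s | F_s) ≤ ½ whenever 0 ≤ s ≤ t ≤ T and t − s ≤ δ₀ for some δ₀ > 0. If moreover all conditional moments satisfy E((A_t − A_s)^k | F_s) ≤ k! 2^{−k} for such s, t, then E exp(A_T) ≤ 2^{1 + T/δ₀}. -/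
open MeasureTheory

private lemma khas_step {Ω : Type*} {m0 : MeasurableSpace Ω} (μ : Measure Ω)
    [IsProbabilityMeasure μ] (F : Filtration ℝ m0) (T : ℝ)
    (A : ℝ → Ω → ℝ)
    (hpos : ∀ t ω, 0 ≤ A t ω)
    (hmono : ∀ s t : ℝ, s ≤ t → ∀ ω, A s ω ≤ A t ω)
    (hadapted : Adapted F A)
    (s t : ℝ) (hst : s ≤ t) (htT : t ≤ T)
    (hcond : ∀ k : ℕ, μ[fun ω => (A t ω - A s ω) ^ k | F s] ≤ᵐ[μ]
        fun _ => (Nat.factorial k : ℝ) * (2⁻¹ : ℝ) ^ k)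
    (hInt : Integrable (fun ω => Real.exp (A T ω)) μ) :
    ∫ ω, Real.exp (A t ω) ∂μ ≤ 2 * ∫ ω, Real.exp (A s ω) ∂μ := by
  have hsT : s ≤ T := hst.trans htT
  -- measurability facts
  have hAs_meas : StronglyMeasurable (A s) := ((hadapted s).mono (F.le s) le_rfl).stronglyMeasurable
  have hAt_meas : StronglyMeasurable (A t) := ((hadapted t).mono (F.le t) le_rfl).stronglyMeasurable
  have hexpAs_meas : StronglyMeasurable fun ω => Real.exp (A s ω) :=
    Real.continuous_exp.comp_stronglyMeasurable hAs_meas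
  have hexpAs_Fs : StronglyMeasurable[F s] fun ω => Real.exp (A s ω) :=
    Real.continuous_exp.comp_stronglyMeasurable (hadapted s).stronglyMeasurable
  set Δ : Ω → ℝ := fun ω => A t ω - A s ω with hΔdef
  have hΔmeas : StronglyMeasurable Δ := hAt_meas.sub hAs_meas
  have hΔpos : ∀ ω, 0 ≤ Δ ω := fun ω => sub_nonneg.2 (hmono s t hst ω)
  -- integrability of exp (A u) for u ≤ T
  have hexpInt : ∀ u : ℝ, u ≤ T → Integrable (fun ω => Real.exp (A u ω)) μ := by
    intro u huT
    refine hInt.mono ((Real.continuous_exp.comp_stronglyMeasurable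
      ((hadapted u).mono (F.le u) le_rfl).stronglyMeasurable).aestronglyMeasurable) (Filter.Eventually.of_forall ?_)
    intro ω
    rw [Real.norm_eq_abs, Real.norm_eq_abs, abs_of_nonneg (Real.exp_pos _).le,
      abs_of_nonneg (Real.exp_pos _).le]
    exact Real.exp_le_exp.2 (hmono u T huT ω)
  -- key pointwise bound : exp (A s) * Δ ^ k ≤ k! * exp (A T)
  have hGle : ∀ (k : ℕ) ω, Real.exp (A s ω) * Δ ω ^ k ≤
      (Nat.factorial k : ℝ) * Real.exp (A T ω) := by
    intro k ω
    have h1 : Δ ω ^ k ≤ (Nat.factorial k : ℝ) * Real.exp (Δ ω) := by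
      have := Real.pow_div_factorial_le_exp (Δ ω) (hΔpos ω) k
      rw [div_le_iff₀ (by positivity : (0:ℝ) < (Nat.factorial k : ℝ))] at this
      linarith [this]
    calc Real.exp (A s ω) * Δ ω ^ k
        ≤ Real.exp (A s ω) * ((Nat.factorial k : ℝ) * Real.exp (Δ ω)) :=
          mul_le_mul_of_nonneg_left h1 (Real.exp_pos _).le
      _ = (Nat.factorial k : ℝ) * Real.exp (A t ω) := by
          have h2 : A t ω = A s ω + Δ ω := by simp [hΔdef]
          rw [h2, Real.exp_add]; ring
      _ ≤ (Nat.factorial k : ℝ) * Real.exp (A T ω) := by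
          refine mul_le_mul_of_nonneg_left ?_ (by positivity)
          exact Real.exp_le_exp.2 (hmono t T htT ω)
  set G : ℕ → Ω → ℝ := fun k ω => Real.exp (A s ω) * Δ ω ^ k with hGdef
  have hGnonneg : ∀ k ω, 0 ≤ G k ω := fun k ω =>
    mul_nonneg (Real.exp_pos _).le (pow_nonneg (hΔpos ω) k)
  have hGint : ∀ k, Integrable (G k) μ := by
    intro k
    refine Integrable.mono' (hInt.const_mul (Nat.factorial k : ℝ))
      ((hexpAs_meas.mul (hΔmeas.pow k)).aestronglyMeasurable)
      (Filter.Eventually.of_forall fun ω => ?_)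
    rw [Real.norm_eq_abs, abs_of_nonneg (hGnonneg k ω)]
    exact hGle k ω
  have hΔkint : ∀ k, Integrable (fun ω => Δ ω ^ k) μ := by
    intro k
    refine Integrable.mono' (hInt.const_mul (Nat.factorial k : ℝ))
      ((hΔmeas.pow k).aestronglyMeasurable)
      (Filter.Eventually.of_forall fun ω => ?_)
    rw [Real.norm_eq_abs, abs_of_nonneg (pow_nonneg (hΔpos ω) k)]
    calc Δ ω ^ k ≤ Real.exp (A s ω) * Δ ω ^ k := by
          nlinarith [Real.add_one_le_exp (A s ω), hpos s ω, pow_nonneg (hΔpos ω) k]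
      _ ≤ (Nat.factorial k : ℝ) * Real.exp (A T ω) := hGle k ω
  set C : ℝ := ∫ ω, Real.exp (A s ω) ∂μ with hCdef
  have hCnonneg : 0 ≤ C := integral_nonneg fun ω => (Real.exp_pos _).le
  -- key integral bound for each k
  have hkey : ∀ k : ℕ, ∫ ω, G k ω ∂μ ≤ (Nat.factorial k : ℝ) * (2⁻¹ : ℝ) ^ k * C := by
    intro k
    have hpull : μ[(fun ω => Real.exp (A s ω)) * (fun ω => Δ ω ^ k) | F s] =ᵐ[μ]
        (fun ω => Real.exp (A s ω)) * μ[fun ω => Δ ω ^ k | F s] :=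
      condExp_mul_of_stronglyMeasurable_left hexpAs_Fs (hGint k) (hΔkint k)
    have int1 : Integrable ((fun ω => Real.exp (A s ω)) * μ[fun ω => Δ ω ^ k | F s]) μ :=
      integrable_condExp.congr hpull
    have int2 : Integrable (fun ω => Real.exp (A s ω) *
        ((Nat.factorial k : ℝ) * (2⁻¹ : ℝ) ^ k)) μ :=
      (hexpInt s hsT).mul_const _
    calc ∫ ω, G k ω ∂μ
        = ∫ ω, (μ[(fun ω => Real.exp (A s ω)) * (fun ω => Δ ω ^ k) | F s]) ω ∂μ :=
          (integral_condExp (F.le s)).symm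
      _ = ∫ ω, ((fun ω => Real.exp (A s ω)) * μ[fun ω => Δ ω ^ k | F s]) ω ∂μ :=
          integral_congr_ae hpull
      _ ≤ ∫ ω, Real.exp (A s ω) * ((Nat.factorial k : ℝ) * (2⁻¹ : ℝ) ^ k) ∂μ := by
          refine integral_mono_ae int1 int2 ?_
          filter_upwards [hcond k] with ω hω
          exact mul_le_mul_of_nonneg_left hω (Real.exp_pos _).le
      _ = (Nat.factorial k : ℝ) * (2⁻¹ : ℝ) ^ k * C := by
          rw [integral_mul_const]; ring
  -- the series expansion
  set Fk : ℕ → Ω → ℝ := fun k ω => Real.exp (A s ω) * Δ ω ^ k / (Nat.factorial k : ℝ)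
    with hFkdef
  have hFkint : ∀ k, Integrable (Fk k) μ := fun k => (hGint k).div_const _
  have hFknonneg : ∀ k ω, 0 ≤ Fk k ω := fun k ω =>
    div_nonneg (hGnonneg k ω) (by positivity)
  have hFkbound : ∀ k, ∫ ω, Fk k ω ∂μ ≤ (2⁻¹ : ℝ) ^ k * C := by
    intro k
    have h1 : ∫ ω, Fk k ω ∂μ = (∫ ω, G k ω ∂μ) / (Nat.factorial k : ℝ) := by
      simp_rw [hFkdef, integral_div]; rfl
    rw [h1, div_le_iff₀ (by positivity : (0:ℝ) < (Nat.factorial k : ℝ))]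
    calc ∫ ω, G k ω ∂μ ≤ (Nat.factorial k : ℝ) * (2⁻¹ : ℝ) ^ k * C := hkey k
      _ = (2⁻¹ : ℝ) ^ k * C * (Nat.factorial k : ℝ) := by ring
  have hnormint : ∀ k, ∫ ω, ‖Fk k ω‖ ∂μ = ∫ ω, Fk k ω ∂μ := by
    intro k
    refine integral_congr_ae (Filter.Eventually.of_forall fun ω => ?_)
    simp [Real.norm_eq_abs, abs_of_nonneg (hFknonneg k ω)]
  have hgeom : Summable (fun k : ℕ => (2⁻¹ : ℝ) ^ k * C) :=
    (summable_geometric_of_lt_one (by norm_num) (by norm_num)).mul_right C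
  have hsumnorm : Summable fun k => ∫ ω, ‖Fk k ω‖ ∂μ := by
    refine Summable.of_nonneg_of_le (fun k => ?_) (fun k => ?_) hgeom
    · exact integral_nonneg fun ω => norm_nonneg _
    · rw [hnormint k]; exact hFkbound k
  have hexpand : ∀ ω, Real.exp (A t ω) = ∑' k : ℕ, Fk k ω := by
    intro ω
    have h1 : A t ω = A s ω + Δ ω := by simp [hΔdef]
    have h2 : Real.exp (Δ ω) = ∑' k : ℕ, Δ ω ^ k / (Nat.factorial k : ℝ) := by
      rw [Real.exp_eq_exp_ℝ, NormedSpace.exp_eq_tsum_div]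
    rw [h1, Real.exp_add, h2, ← tsum_mul_left]
    refine tsum_congr fun k => ?_
    rw [hFkdef]
    simp only []
    ring
  calc ∫ ω, Real.exp (A t ω) ∂μ
      = ∫ ω, ∑' k : ℕ, Fk k ω ∂μ := by simp_rw [hexpand]
    _ = ∑' k : ℕ, ∫ ω, Fk k ω ∂μ :=
        (integral_tsum_of_summable_integral_norm hFkint hsumnorm).symm
    _ ≤ ∑' k : ℕ, (2⁻¹ : ℝ) ^ k * C := by
        refine Summable.tsum_le_tsum hFkbound ?_ hgeom
        have : (fun k => ∫ ω, Fk k ω ∂μ) = fun k => ∫ ω, ‖Fk k ω‖ ∂μ := by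
          funext k; rw [hnormint k]
        rw [this]; exact hsumnorm
    _ = 2 * C := by
        rw [tsum_mul_right, tsum_geometric_of_lt_one (by norm_num) (by norm_num)]
        norm_num

theorem stmt17 {Ω : Type*} {m0 : MeasurableSpace Ω} (μ : Measure Ω)
    [IsProbabilityMeasure μ] (F : Filtration ℝ m0)
    (T δ0 : ℝ) (hT : 0 < T) (hδ0 : 0 < δ0)
    (A : ℝ → Ω → ℝ)
    (hA0 : ∀ ω, A 0 ω = 0)
    (hpos : ∀ t ω, 0 ≤ A t ω)
    (hmono : ∀ s t : ℝ, s ≤ t → ∀ ω, A s ω ≤ A t ω)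
    (hadapted : Adapted F A)
    (h1 : ∀ s t : ℝ, 0 ≤ s → s ≤ t → t ≤ T → t - s ≤ δ0 →
      μ[fun ω => A t ω - A s ω | F s] ≤ᵐ[μ] fun _ => (1/2 : ℝ))
    (hk : ∀ s t : ℝ, 0 ≤ s → s ≤ t → t ≤ T → t - s ≤ δ0 → ∀ k : ℕ,
      μ[fun ω => (A t ω - A s ω) ^ k | F s] ≤ᵐ[μ]
        fun _ => (Nat.factorial k : ℝ) * (2⁻¹ : ℝ) ^ k) :
    ∫ ω, Real.exp (A T ω) ∂μ ≤ (2:ℝ) ^ (1 + T/δ0) := by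
  by_cases hInt : Integrable (fun ω => Real.exp (A T ω)) μ
  swap
  · rw [integral_undef hInt]
    positivity
  set n : ℕ := ⌈T / δ0⌉₊ with hndef
  have hTδ : 0 < T / δ0 := div_pos hT hδ0
  have hn0 : 0 < n := Nat.ceil_pos.2 hTδ
  have hn0' : (0:ℝ) < (n:ℝ) := by exact_mod_cast hn0
  have hTn : 0 < T / (n:ℝ) := div_pos hT hn0'
  have hTnδ : T / (n:ℝ) ≤ δ0 := by
    rw [div_le_iff₀ hn0']
    have h2 : T / δ0 ≤ (n:ℝ) := Nat.le_ceil _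
    rw [div_le_iff₀ hδ0] at h2
    linarith
  -- iteration
  have hiter : ∀ i : ℕ, i ≤ n →
      ∫ ω, Real.exp (A ((i:ℝ) * (T / (n:ℝ))) ω) ∂μ ≤ (2:ℝ) ^ i := by
    intro i
    induction i with
    | zero =>
      intro _
      have : (fun ω => Real.exp (A ((0:ℕ) * (T / (n:ℝ))) ω)) = fun _ => (1:ℝ) := by
        funext ω
        norm_num [hA0 ω]
      rw [this, integral_const, probReal_univ]
      simp
    | succ i ih =>
      intro hin
      have hin' : i ≤ n := Nat.le_of_succ_le hin
      have hi1n : ((i:ℝ) + 1) ≤ (n:ℝ) := by exact_mod_cast hin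
      have hs0 : (0:ℝ) ≤ (i:ℝ) * (T / (n:ℝ)) := by positivity
      have hst : (i:ℝ) * (T / (n:ℝ)) ≤ ((i:ℝ) + 1) * (T / (n:ℝ)) := by nlinarith
      have htT : ((i:ℝ) + 1) * (T / (n:ℝ)) ≤ T := by
        have : ((i:ℝ) + 1) * (T / (n:ℝ)) ≤ (n:ℝ) * (T / (n:ℝ)) := by nlinarith
        rwa [mul_div_cancel₀ T (ne_of_gt hn0')] at this
      have hδ : ((i:ℝ) + 1) * (T / (n:ℝ)) - (i:ℝ) * (T / (n:ℝ)) ≤ δ0 := by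
        have : ((i:ℝ) + 1) * (T / (n:ℝ)) - (i:ℝ) * (T / (n:ℝ)) = T / (n:ℝ) := by ring
        rw [this]; exact hTnδ
      have hstep := khas_step μ F T A hpos hmono hadapted
        ((i:ℝ) * (T / (n:ℝ))) (((i:ℝ) + 1) * (T / (n:ℝ))) hst htT
        (hk _ _ hs0 hst htT hδ) hInt
      have hcast : ((i + 1 : ℕ) : ℝ) = (i:ℝ) + 1 := by push_cast; ring
      rw [hcast]
      calc ∫ ω, Real.exp (A (((i:ℝ) + 1) * (T / (n:ℝ))) ω) ∂μ
          ≤ 2 * ∫ ω, Real.exp (A ((i:ℝ) * (T / (n:ℝ))) ω) ∂μ := hstep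
        _ ≤ 2 * (2:ℝ) ^ i := by
            have := ih hin'
            linarith
        _ = (2:ℝ) ^ (i + 1) := by ring
  have hfin := hiter n le_rfl
  rw [mul_div_cancel₀ T (ne_of_gt hn0')] at hfin
  refine hfin.trans ?_
  rw [← Real.rpow_natCast 2 n]
  refine Real.rpow_le_rpow_of_exponent_le (by norm_num) ?_
  have := Nat.ceil_lt_add_one hTδ.le
  have h2 : ((⌈T / δ0⌉₊ : ℕ) : ℝ) < T / δ0 + 1 := this
  rw [hndef]
  linarith
end

section
/- If b ∈ W^{θ,p}(ℝ^d) with p > max(2, d) and θ > 0 (i.e., the Gagliardo seminorm [b]_{W^{p,θ}} is finite), then b belongs to the Gaussian–Besov class GB²_{1−d/p, θ}(ℝ^d): there is a constant C > 0 with (rs)^{−d/2} ∫∫ |b(x)−b(y)|² e^{−|x−z|²/s} e^{−|y−x|²/r} dy dx ≤ C [b]_{W^{p,θ}}^{2/p} s^{−d/p} r^θ for all r, s > 0 and z ∈ ℝ^d. -/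
open MeasureTheory Real

variable {d : ℕ}

local notation "E" => EuclideanSpace ℝ (Fin d)

lemma gauss_integrable {c : ℝ} (hc : 0 < c) :
    Integrable (fun v : E => Real.exp (-c * ‖v‖ ^ 2)) := by
  have h := (GaussianFourier.integrable_cexp_neg_mul_sq_norm_add
    (V := E) (b := (c : ℂ)) (by simpa using hc) 0 0).norm
  refine h.congr (Filter.Eventually.of_forall fun v => ?_)
  show ‖Complex.exp _‖ = _
  rw [Complex.norm_exp]
  congr 1
  have : ((‖v‖:ℂ) ^ 2).re = ‖v‖ ^ 2 := by
    rw [← Complex.ofReal_pow]; exact Complex.ofReal_re _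
  simp [Complex.add_re, Complex.mul_re, this]

lemma gauss_value {c : ℝ} (hc : 0 < c) :
    ∫ v : E, Real.exp (-c * ‖v‖ ^ 2) = (Real.pi / c) ^ ((d : ℝ) / 2) := by
  rw [GaussianFourier.integral_rexp_neg_mul_sq_norm hc]
  simp [finrank_euclideanSpace_fin]

lemma moment_cont {a : ℝ} (ha : 0 ≤ a) :
    Continuous (fun u : E => ‖u‖ ^ a * Real.exp (-‖u‖ ^ 2)) := by
  apply Continuous.mul
  · exact continuous_norm.rpow_const (fun x => Or.inr ha)
  · exact (Real.continuous_exp.comp (continuous_norm.pow 2).neg)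

lemma rpow_exp_bound {a t : ℝ} (ha : 0 ≤ a) (ht : 0 ≤ t) :
    t ^ a * Real.exp (-(t ^ 2) / 2) ≤ Real.exp (a ^ 2 / 2) + 1 := by
  have hexp : (0:ℝ) < Real.exp (a ^ 2 / 2) := Real.exp_pos _
  rcases le_or_gt t 1 with h1 | h1
  · have h2 : t ^ a ≤ 1 := Real.rpow_le_one ht h1 ha
    have h3 : Real.exp (-(t ^ 2) / 2) ≤ 1 := Real.exp_le_one_iff.2 (by nlinarith)
    nlinarith [Real.exp_pos (-(t^2)/2), Real.rpow_nonneg ht a]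
  · have h0 : (0:ℝ) < t := lt_trans zero_lt_one h1
    have h2 : t ^ a = Real.exp (a * Real.log t) := by
      rw [Real.rpow_def_of_pos h0, mul_comm]
    have h3 : Real.log t ≤ t := (Real.log_le_sub_one_of_pos h0).trans (by linarith)
    have h4 : t ^ a * Real.exp (-(t ^ 2) / 2) = Real.exp (a * Real.log t + -(t^2)/2) := by
      rw [h2, Real.exp_add]
    rw [h4]
    have h5 : a * Real.log t + -(t^2)/2 ≤ a ^ 2 / 2 := by
      have : a * Real.log t ≤ a * t := mul_le_mul_of_nonneg_left h3 ha
      nlinarith [sq_nonneg (t - a)]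
    linarith [Real.exp_le_exp.2 h5]

lemma moment_integrable {a : ℝ} (ha : 0 ≤ a) :
    Integrable (fun u : E => ‖u‖ ^ a * Real.exp (-‖u‖ ^ 2)) := by
  have hg : Integrable (fun u : E => (Real.exp (a ^ 2 / 2) + 1) *
      Real.exp (-(1/2 : ℝ) * ‖u‖ ^ 2)) := (gauss_integrable (by norm_num)).const_mul _
  refine hg.mono' (moment_cont ha).aestronglyMeasurable
    (Filter.Eventually.of_forall fun u => ?_)
  have h0 : (0:ℝ) ≤ ‖u‖ ^ a * Real.exp (-‖u‖ ^ 2) := by positivity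
  rw [Real.norm_eq_abs, abs_of_nonneg h0]
  have key := rpow_exp_bound ha (norm_nonneg u)
  have hsplit : Real.exp (-‖u‖ ^ 2) =
      Real.exp (-(‖u‖ ^ 2) / 2) * Real.exp (-(1/2 : ℝ) * ‖u‖ ^ 2) := by
    rw [← Real.exp_add]; ring_nf
  rw [hsplit, ← mul_assoc]
  have := Real.exp_pos (-(1/2 : ℝ) * ‖u‖ ^ 2)
  nlinarith [Real.rpow_nonneg (norm_nonneg u) a, Real.exp_pos (-(‖u‖ ^ 2) / 2)]

lemma psi_eq {a r : ℝ} (ha : 0 ≤ a) (hr : 0 < r) (w : E) :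
    ‖w‖ ^ a * Real.exp (-‖w‖ ^ 2 / r) =
      r ^ (a / 2) * (‖(Real.sqrt r)⁻¹ • w‖ ^ a * Real.exp (-‖(Real.sqrt r)⁻¹ • w‖ ^ 2)) := by
  have hR : 0 < Real.sqrt r := Real.sqrt_pos.2 hr
  have hnorm : ‖(Real.sqrt r)⁻¹ • w‖ = (Real.sqrt r)⁻¹ * ‖w‖ := by
    rw [norm_smul, Real.norm_eq_abs, abs_of_pos (inv_pos.2 hR)]
  rw [hnorm]
  have hsq : ((Real.sqrt r)⁻¹ * ‖w‖) ^ 2 = ‖w‖ ^ 2 / r := by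
    rw [mul_pow, inv_pow, Real.sq_sqrt hr.le]
    ring
  rw [hsq, Real.mul_rpow (inv_nonneg.2 hR.le) (norm_nonneg w)]
  have hinv : (Real.sqrt r)⁻¹ ^ a = (r ^ (a/2 : ℝ))⁻¹ := by
    rw [Real.inv_rpow hR.le, Real.sqrt_eq_rpow, ← Real.rpow_mul hr.le]
    ring_nf
  rw [hinv]
  have h1 : (0:ℝ) < r ^ (a/2 : ℝ) := Real.rpow_pos_of_pos hr _
  have : -(‖w‖ ^ 2 / r) = -‖w‖^2 / r := by ring
  field_simp

lemma psi_integrable {a r : ℝ} (ha : 0 ≤ a) (hr : 0 < r) :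
    Integrable (fun w : E => ‖w‖ ^ a * Real.exp (-‖w‖ ^ 2 / r)) := by
  have hR : Real.sqrt r ≠ 0 := (Real.sqrt_pos.2 hr).ne'
  have h : Integrable (fun w : E =>
      ‖(Real.sqrt r)⁻¹ • w‖ ^ a * Real.exp (-‖(Real.sqrt r)⁻¹ • w‖ ^ 2)) :=
    (moment_integrable ha).comp_smul (inv_ne_zero hR)
  exact (h.const_mul (r ^ (a/2 : ℝ))).congr
    (Filter.Eventually.of_forall fun w => (psi_eq ha hr w).symm)

lemma psi_value {a r : ℝ} (ha : 0 ≤ a) (hr : 0 < r) :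
    ∫ w : E, ‖w‖ ^ a * Real.exp (-‖w‖ ^ 2 / r) =
      r ^ (((d:ℝ) + a) / 2) * ∫ u : E, ‖u‖ ^ a * Real.exp (-‖u‖ ^ 2) := by
  have hR : 0 < Real.sqrt r := Real.sqrt_pos.2 hr
  rw [integral_congr_ae (Filter.Eventually.of_forall fun w => psi_eq ha hr w)]
  rw [integral_const_mul]
  rw [Measure.integral_comp_inv_smul_of_nonneg (volume)
    (fun u : E => ‖u‖ ^ a * Real.exp (-‖u‖ ^ 2)) hR.le]
  rw [finrank_euclideanSpace_fin, smul_eq_mul, ← mul_assoc]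
  congr 1
  have : Real.sqrt r ^ d = r ^ ((d:ℝ)/2) := by
    rw [← Real.rpow_natCast (Real.sqrt r) d, Real.sqrt_eq_rpow, ← Real.rpow_mul hr.le]
    ring_nf
  rw [this, ← Real.rpow_add hr]
  congr 1
  ring

lemma phi_integrable {s : ℝ} (hs : 0 < s) (z : E) :
    Integrable (fun x : E => Real.exp (-‖x - z‖ ^ 2 / s)) := by
  have h : Integrable (fun x : E => Real.exp (-s⁻¹ * ‖x - z‖ ^ 2)) := by
    have := (gauss_integrable (d := d) (c := s⁻¹) (inv_pos.2 hs))
    exact this.comp_sub_right z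
  exact h.congr (Filter.Eventually.of_forall fun x => by simp only []; rw [neg_div, div_eq_inv_mul, neg_mul])

lemma phi_value {s : ℝ} (hs : 0 < s) (z : E) :
    ∫ x : E, Real.exp (-‖x - z‖ ^ 2 / s) = (Real.pi * s) ^ ((d:ℝ) / 2) := by
  have h1 : ∀ x : E, Real.exp (-‖x - z‖ ^ 2 / s) = Real.exp (-s⁻¹ * ‖x - z‖ ^ 2) := by
    intro x; rw [neg_div, div_eq_inv_mul, neg_mul]
  simp_rw [h1]
  rw [integral_sub_right_eq_self (fun x : E => Real.exp (-s⁻¹ * ‖x‖ ^ 2)) z]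
  rw [gauss_value (inv_pos.2 hs)]
  congr 1
  field_simp

open ENNReal in
lemma prod_lintegral_eq {φ ψ : E → ℝ} (hφ : Continuous φ) (hψ : Continuous ψ)
    (hφ0 : ∀ x, 0 ≤ φ x) :
    ∫⁻ q : E × E, ENNReal.ofReal (φ q.1 * ψ (q.2 - q.1)) =
      (∫⁻ x : E, ENNReal.ofReal (φ x)) * ∫⁻ w : E, ENNReal.ofReal (ψ w) := by
  rw [MeasureTheory.Measure.volume_eq_prod]
  have hm : Measurable fun q : E × E => ENNReal.ofReal (φ q.1 * ψ (q.2 - q.1)) := by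
    apply Measurable.ennreal_ofReal
    exact ((hφ.comp continuous_fst).mul
      (hψ.comp (continuous_snd.sub continuous_fst))).measurable
  rw [lintegral_prod _ hm.aemeasurable]
  have hinner : ∀ x : E, (∫⁻ y : E, ENNReal.ofReal (φ x * ψ (y - x))) =
      ENNReal.ofReal (φ x) * ∫⁻ w : E, ENNReal.ofReal (ψ w) := by
    intro x
    simp_rw [ENNReal.ofReal_mul (hφ0 x)]
    rw [lintegral_const_mul' _ _ ENNReal.ofReal_ne_top]
    congr 1
    have : ∀ y : E, y - x = y + (-x) := fun y => sub_eq_add_neg y x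
    simp_rw [this]
    exact lintegral_add_right_eq_self (fun w : E => ENNReal.ofReal (ψ w)) (-x)
  simp_rw [hinner]
  exact lintegral_mul_const _ hφ.measurable.ennreal_ofReal

open ENNReal in
lemma core (d : ℕ) (hd : 0 < d) (p θ : ℝ) (hp2 : 2 < p) (hθ : 0 < θ)
    (b : EuclideanSpace ℝ (Fin d) → EuclideanSpace ℝ (Fin d))
    (hb : Integrable (fun q : EuclideanSpace ℝ (Fin d) × EuclideanSpace ℝ (Fin d) =>
      ‖b q.1 - b q.2‖ ^ p / ‖q.1 - q.2‖ ^ ((d:ℝ) + p * θ)))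
    (r s : ℝ) (hr : 0 < r) (hs : 0 < s) (z : EuclideanSpace ℝ (Fin d)) :
    (∫ q : EuclideanSpace ℝ (Fin d) × EuclideanSpace ℝ (Fin d),
        ‖b q.1 - b q.2‖ ^ 2 * Real.exp (-‖q.1 - z‖ ^ 2 / s) *
          Real.exp (-‖q.2 - q.1‖ ^ 2 / r))
      ≤ (∫ q : EuclideanSpace ℝ (Fin d) × EuclideanSpace ℝ (Fin d),
            ‖b q.1 - b q.2‖ ^ p / ‖q.1 - q.2‖ ^ ((d:ℝ) + p * θ)) ^ (2/p) *
        ((Real.pi * s) ^ ((d:ℝ)/2) *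
          (r ^ (((d:ℝ) + 2*((d:ℝ)+p*θ)/(p-2))/2) *
            ∫ u : EuclideanSpace ℝ (Fin d),
              ‖u‖ ^ (2*((d:ℝ)+p*θ)/(p-2)) * Real.exp (-‖u‖ ^ 2))) ^ ((p-2)/p) := by
  have hp0 : (0:ℝ) < p := by linarith
  have hpm2 : (0:ℝ) < p - 2 := by linarith
  have hdpθ : (0:ℝ) < (d:ℝ) + p * θ := by
    have : (0:ℝ) < (d:ℝ) := by exact_mod_cast hd
    nlinarith
  set a : ℝ := 2*((d:ℝ)+p*θ)/(p-2) with ha_def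
  have ha : 0 < a := by positivity
  set a' : ℝ := 2*((d:ℝ)+p*θ)/p with ha'_def
  have ha' : 0 < a' := by positivity
  set G : EuclideanSpace ℝ (Fin d) × EuclideanSpace ℝ (Fin d) → ℝ :=
    fun q => ‖b q.1 - b q.2‖ ^ p / ‖q.1 - q.2‖ ^ ((d:ℝ) + p * θ) with hG_def
  set F : EuclideanSpace ℝ (Fin d) × EuclideanSpace ℝ (Fin d) → ℝ :=
    fun q => ‖b q.1 - b q.2‖ ^ 2 * Real.exp (-‖q.1 - z‖ ^ 2 / s) *
      Real.exp (-‖q.2 - q.1‖ ^ 2 / r) with hF_def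
  set h : EuclideanSpace ℝ (Fin d) × EuclideanSpace ℝ (Fin d) → ℝ :=
    fun q => ‖q.1 - q.2‖ ^ a' * (Real.exp (-‖q.1 - z‖ ^ 2 / s) *
      Real.exp (-‖q.2 - q.1‖ ^ 2 / r)) with hh_def
  have hG0 : ∀ q, 0 ≤ G q := fun q => div_nonneg
    (Real.rpow_nonneg (norm_nonneg _) _) (Real.rpow_nonneg (norm_nonneg _) _)
  have hF0 : ∀ q, 0 ≤ F q := fun q => by
    have := Real.exp_pos (-‖q.1 - z‖ ^ 2 / s)
    have := Real.exp_pos (-‖q.2 - q.1‖ ^ 2 / r)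
    positivity
  have hh0 : ∀ q, 0 ≤ h q := fun q => by
    have := Real.exp_pos (-‖q.1 - z‖ ^ 2 / s)
    have := Real.exp_pos (-‖q.2 - q.1‖ ^ 2 / r)
    positivity
  set I : ℝ := ∫ q, G q with hI_def
  have hI0 : 0 ≤ I := integral_nonneg hG0
  -- pointwise factorization
  have hpt : ∀ q, ENNReal.ofReal (F q) =
      (ENNReal.ofReal (G q)) ^ (2/p) * ENNReal.ofReal (h q) := by
    intro q
    rw [ENNReal.ofReal_rpow_of_nonneg (hG0 q) (by positivity),
      ← ENNReal.ofReal_mul (Real.rpow_nonneg (hG0 q) _)]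
    congr 1
    by_cases hq : q.1 = q.2
    · have hb0 : b q.1 - b q.2 = 0 := by rw [hq, sub_self]
      have hq0 : q.1 - q.2 = 0 := by rw [hq, sub_self]
      simp only [hF_def, hG_def, hh_def, hb0, hq0, norm_zero]
      rw [Real.zero_rpow hp0.ne', zero_div, Real.zero_rpow (by positivity : (2/p : ℝ) ≠ 0),
        Real.zero_rpow ha'.ne']
      ring
    · have hD : 0 < ‖q.1 - q.2‖ := norm_pos_iff.2 (sub_ne_zero.2 hq)
      have hDa' : (0:ℝ) < ‖q.1 - q.2‖ ^ a' := Real.rpow_pos_of_pos hD _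
      have e0 : G q ^ (2/p) = ‖b q.1 - b q.2‖ ^ (2:ℕ) / ‖q.1 - q.2‖ ^ a' := by
        rw [hG_def, Real.div_rpow (Real.rpow_nonneg (norm_nonneg _) _)
          (Real.rpow_nonneg (norm_nonneg _) _),
          ← Real.rpow_natCast ‖b q.1 - b q.2‖ 2,
          ← Real.rpow_mul (norm_nonneg _), ← Real.rpow_mul (norm_nonneg _)]
        congr 2
        · field_simp; norm_num
        · rw [ha'_def]; field_simp
      rw [e0]
      simp only [hF_def, hh_def]
      field_simp
  -- Hölder
  have hG_aem : AEMeasurable (fun q => ENNReal.ofReal (G q)) volume :=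
    ENNReal.measurable_ofReal.comp_aemeasurable hb.aestronglyMeasurable.aemeasurable
  have hh_cont : Continuous h := by
    apply Continuous.mul
    · exact ((continuous_fst.sub continuous_snd).norm).rpow_const (fun q => Or.inr ha'.le)
    · apply Continuous.mul
      · exact Real.continuous_exp.comp
          (((continuous_fst.sub continuous_const).norm.pow 2).neg.div_const s)
      · exact Real.continuous_exp.comp
          (((continuous_snd.sub continuous_fst).norm.pow 2).neg.div_const r)
  have hconj : (p/2).HolderConjugate (p/(p-2)) := by
    rw [Real.holderConjugate_iff]
    constructor
    · rw [lt_div_iff₀ (by norm_num : (0:ℝ) < 2)]; linarith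
    · have h2 : p - 2 ≠ 0 := hpm2.ne'
      field_simp
      ring
  have holder := ENNReal.lintegral_mul_le_Lp_mul_Lq volume hconj
    (hG_aem.pow_const (2/p)) hh_cont.measurable.ennreal_ofReal.aemeasurable
  -- identify LHS of holder
  have hLHS : (∫⁻ q, ENNReal.ofReal (F q)) ≤
      (∫⁻ q, ((ENNReal.ofReal (G q)) ^ (2/p)) ^ (p/2)) ^ (1/(p/2)) *
      (∫⁻ q, (ENNReal.ofReal (h q)) ^ (p/(p-2))) ^ (1/(p/(p-2))) := by
    refine le_trans (le_of_eq (lintegral_congr fun q => ?_)) holder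
    rw [hpt q]; rfl
  have e1 : ∀ q, ((ENNReal.ofReal (G q)) ^ (2/p)) ^ (p/2) = ENNReal.ofReal (G q) := by
    intro q
    rw [← ENNReal.rpow_mul]
    have e : (2/p) * (p/2) = 1 := by field_simp
    rw [e, ENNReal.rpow_one]
  have e2 : (1/(p/2)) = 2/p := one_div_div p 2
  have e3 : (1/(p/(p-2))) = (p-2)/p := one_div_div p (p-2)
  -- identify the G-factor
  have eG : (∫⁻ q, ENNReal.ofReal (G q)) = ENNReal.ofReal I :=
    (ofReal_integral_eq_lintegral_ofReal hb (Filter.Eventually.of_forall hG0)).symm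
  -- bound the h-factor
  set ψ : EuclideanSpace ℝ (Fin d) → ℝ := fun w => ‖w‖ ^ a * Real.exp (-‖w‖ ^ 2 / r)
    with hψ_def
  set φ : EuclideanSpace ℝ (Fin d) → ℝ := fun x => Real.exp (-‖x - z‖ ^ 2 / s) with hφ_def
  have hHpt : ∀ q, (ENNReal.ofReal (h q)) ^ (p/(p-2)) ≤
      ENNReal.ofReal (φ q.1 * ψ (q.2 - q.1)) := by
    intro q
    rw [ENNReal.ofReal_rpow_of_nonneg (hh0 q) (by positivity)]
    apply ENNReal.ofReal_le_ofReal
    have hp' : (1:ℝ) ≤ p/(p-2) := by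
      rw [le_div_iff₀ hpm2]; linarith
    have hexp_le : ∀ t : ℝ, t ≤ 0 → Real.exp t ^ (p/(p-2)) ≤ Real.exp t := by
      intro t ht
      rw [← Real.exp_mul]
      apply Real.exp_le_exp.2
      nlinarith
    have hmr : ∀ q' : EuclideanSpace ℝ (Fin d) × EuclideanSpace ℝ (Fin d), True := fun _ => trivial
    rw [hh_def]
    simp only []
    rw [Real.mul_rpow (Real.rpow_nonneg (norm_nonneg _) _) (by positivity),
      Real.mul_rpow (Real.exp_pos _).le (Real.exp_pos _).le]
    have hDa : (‖q.1 - q.2‖ ^ a') ^ (p/(p-2)) = ‖q.2 - q.1‖ ^ a := by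
      rw [← Real.rpow_mul (norm_nonneg _), norm_sub_rev]
      congr 1
      rw [ha'_def, ha_def]
      field_simp
    rw [hDa, hφ_def, hψ_def]
    simp only []
    have h1 : Real.exp (-‖q.1 - z‖ ^ 2 / s) ^ (p/(p-2)) ≤ Real.exp (-‖q.1 - z‖ ^ 2 / s) :=
      hexp_le _ (div_nonpos_of_nonpos_of_nonneg (neg_nonpos.2 (by positivity)) hs.le)
    have h2 : Real.exp (-‖q.2 - q.1‖ ^ 2 / r) ^ (p/(p-2)) ≤ Real.exp (-‖q.2 - q.1‖ ^ 2 / r) :=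
      hexp_le _ (div_nonpos_of_nonpos_of_nonneg (neg_nonpos.2 (by positivity)) hr.le)
    have hDnn : (0:ℝ) ≤ ‖q.2 - q.1‖ ^ a := Real.rpow_nonneg (norm_nonneg _) _
    have hprod : Real.exp (-‖q.1 - z‖ ^ 2 / s) ^ (p/(p-2)) *
        Real.exp (-‖q.2 - q.1‖ ^ 2 / r) ^ (p/(p-2)) ≤
        Real.exp (-‖q.1 - z‖ ^ 2 / s) * Real.exp (-‖q.2 - q.1‖ ^ 2 / r) := by
      apply mul_le_mul h1 h2 (Real.rpow_nonneg (Real.exp_pos _).le _) (Real.exp_pos _).le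
    calc ‖q.2 - q.1‖ ^ a * (Real.exp (-‖q.1 - z‖ ^ 2 / s) ^ (p/(p-2)) *
            Real.exp (-‖q.2 - q.1‖ ^ 2 / r) ^ (p/(p-2)))
        ≤ ‖q.2 - q.1‖ ^ a * (Real.exp (-‖q.1 - z‖ ^ 2 / s) *
            Real.exp (-‖q.2 - q.1‖ ^ 2 / r)) := by
          exact mul_le_mul_of_nonneg_left hprod hDnn
      _ = Real.exp (-‖q.1 - z‖ ^ 2 / s) *
            (‖q.2 - q.1‖ ^ a * Real.exp (-‖q.2 - q.1‖ ^ 2 / r)) := by ring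
  set K2 : ℝ := ∫ u : EuclideanSpace ℝ (Fin d), ‖u‖ ^ a * Real.exp (-‖u‖ ^ 2) with hK2_def
  have hK2nn : 0 ≤ K2 := integral_nonneg (fun u => by positivity)
  have hφ_cont : Continuous φ :=
    Real.continuous_exp.comp (((continuous_id.sub continuous_const).norm.pow 2).neg.div_const s)
  have hψ_cont : Continuous ψ := by
    apply Continuous.mul
    · exact continuous_norm.rpow_const (fun x => Or.inr ha.le)
    · exact Real.continuous_exp.comp ((continuous_norm.pow 2).neg.div_const r)
  have hφ0 : ∀ x, 0 ≤ φ x := fun x => (Real.exp_pos _).le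
  have hH_le : (∫⁻ q : EuclideanSpace ℝ (Fin d) × EuclideanSpace ℝ (Fin d),
      (ENNReal.ofReal (h q)) ^ (p/(p-2))) ≤
      ENNReal.ofReal ((Real.pi * s) ^ ((d:ℝ)/2)) *
        ENNReal.ofReal (r ^ (((d:ℝ) + a)/2) * K2) := by
    calc (∫⁻ q : EuclideanSpace ℝ (Fin d) × EuclideanSpace ℝ (Fin d),
          (ENNReal.ofReal (h q)) ^ (p/(p-2)))
        ≤ ∫⁻ q : EuclideanSpace ℝ (Fin d) × EuclideanSpace ℝ (Fin d),
            ENNReal.ofReal (φ q.1 * ψ (q.2 - q.1)) := lintegral_mono hHpt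
      _ = (∫⁻ x, ENNReal.ofReal (φ x)) * ∫⁻ w, ENNReal.ofReal (ψ w) :=
          prod_lintegral_eq hφ_cont hψ_cont hφ0
      _ = ENNReal.ofReal (∫ x, φ x) * ENNReal.ofReal (∫ w, ψ w) := by
          rw [← ofReal_integral_eq_lintegral_ofReal (phi_integrable hs z)
              (Filter.Eventually.of_forall hφ0),
            ← ofReal_integral_eq_lintegral_ofReal (psi_integrable ha.le hr)
              (Filter.Eventually.of_forall (fun w => by positivity))]
      _ = ENNReal.ofReal ((Real.pi * s) ^ ((d:ℝ)/2)) *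
            ENNReal.ofReal (r ^ (((d:ℝ) + a)/2) * K2) := by
          rw [hφ_def, hψ_def]
          rw [phi_value hs z, psi_value ha.le hr]
  -- assemble in ℝ≥0∞
  simp_rw [e1] at hLHS
  rw [e2, e3, eG] at hLHS
  have main : (∫⁻ q, ENNReal.ofReal (F q)) ≤
      (ENNReal.ofReal I) ^ (2/p) *
        (ENNReal.ofReal ((Real.pi * s) ^ ((d:ℝ)/2)) *
          ENNReal.ofReal (r ^ (((d:ℝ) + a)/2) * K2)) ^ ((p-2)/p) := by
    refine hLHS.trans ?_
    exact mul_le_mul_of_nonneg_left (ENNReal.rpow_le_rpow hH_le (by positivity)) (zero_le)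
  -- convert to real
  have hRne : (ENNReal.ofReal I) ^ (2/p) *
      (ENNReal.ofReal ((Real.pi * s) ^ ((d:ℝ)/2)) *
        ENNReal.ofReal (r ^ (((d:ℝ) + a)/2) * K2)) ^ ((p-2)/p) ≠ ⊤ := by
    apply ENNReal.mul_ne_top
    · exact ENNReal.rpow_ne_top_of_nonneg (by positivity) ENNReal.ofReal_ne_top
    · exact ENNReal.rpow_ne_top_of_nonneg (by positivity)
        (ENNReal.mul_ne_top ENNReal.ofReal_ne_top ENNReal.ofReal_ne_top)
  have hstep : (∫ q, F q) ≤ (∫⁻ q, ENNReal.ofReal (F q)).toReal := by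
    by_cases hint : Integrable F
    · rw [integral_eq_lintegral_of_nonneg_ae (Filter.Eventually.of_forall hF0)
        hint.aestronglyMeasurable]
    · rw [integral_undef hint]; exact ENNReal.toReal_nonneg
  have final : (∫ q, F q) ≤ I ^ (2/p) *
      ((Real.pi * s) ^ ((d:ℝ)/2) * (r ^ (((d:ℝ) + a)/2) * K2)) ^ ((p-2)/p) := by
    refine hstep.trans ?_
    have := ENNReal.toReal_mono hRne main
    refine this.trans (le_of_eq ?_)
    rw [ENNReal.toReal_mul, ← ENNReal.toReal_rpow, ← ENNReal.toReal_rpow,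
      ENNReal.toReal_mul, ENNReal.toReal_ofReal hI0,
      ENNReal.toReal_ofReal (by positivity),
      ENNReal.toReal_ofReal (mul_nonneg (Real.rpow_nonneg hr.le _) hK2nn)]
  exact final

theorem stmt18 (d : ℕ) (hd : 0 < d) (p θ : ℝ) (hp : max 2 (d:ℝ) < p) (hθ : 0 < θ)
    (b : EuclideanSpace ℝ (Fin d) → EuclideanSpace ℝ (Fin d))
    (hb : Integrable (fun q : EuclideanSpace ℝ (Fin d) × EuclideanSpace ℝ (Fin d) =>
      ‖b q.1 - b q.2‖ ^ p / ‖q.1 - q.2‖ ^ ((d:ℝ) + p * θ))) :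
    ∃ C > 0, ∀ r s : ℝ, 0 < r → 0 < s → ∀ z : EuclideanSpace ℝ (Fin d),
      (r * s) ^ (-(d:ℝ)/2) *
        ∫ q : EuclideanSpace ℝ (Fin d) × EuclideanSpace ℝ (Fin d),
          ‖b q.1 - b q.2‖ ^ 2 * Real.exp (-‖q.1 - z‖ ^ 2 / s) *
            Real.exp (-‖q.2 - q.1‖ ^ 2 / r)
      ≤ C * ((∫ q : EuclideanSpace ℝ (Fin d) × EuclideanSpace ℝ (Fin d),
            ‖b q.1 - b q.2‖ ^ p / ‖q.1 - q.2‖ ^ ((d:ℝ) + p * θ)) ^ (1/p)) ^ (2/p) *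
          s ^ (-(d:ℝ)/p) * r ^ θ := by
  have hp2 : (2:ℝ) < p := lt_of_le_of_lt (le_max_left _ _) hp
  have hp0 : (0:ℝ) < p := by linarith
  have hpm2 : (0:ℝ) < p - 2 := by linarith
  have hdpθ : (0:ℝ) < (d:ℝ) + p * θ := by
    have : (0:ℝ) < (d:ℝ) := by exact_mod_cast hd
    nlinarith
  set a : ℝ := 2*((d:ℝ)+p*θ)/(p-2) with ha_def
  have ha : 0 < a := by positivity
  set K2 : ℝ := ∫ u : EuclideanSpace ℝ (Fin d), ‖u‖ ^ a * Real.exp (-‖u‖ ^ 2) with hK2_def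
  have hK2nn : 0 ≤ K2 := integral_nonneg (fun u => by positivity)
  set I : ℝ := ∫ q : EuclideanSpace ℝ (Fin d) × EuclideanSpace ℝ (Fin d),
    ‖b q.1 - b q.2‖ ^ p / ‖q.1 - q.2‖ ^ ((d:ℝ) + p * θ) with hI_def
  have hI0 : 0 ≤ I := integral_nonneg (fun q => div_nonneg
    (Real.rpow_nonneg (norm_nonneg _) _) (Real.rpow_nonneg (norm_nonneg _) _))
  set C2 : ℝ := (Real.pi ^ ((d:ℝ)/2)) ^ ((p-2)/p) * K2 ^ ((p-2)/p) with hC2_def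
  have hC2nn : 0 ≤ C2 := mul_nonneg (Real.rpow_nonneg (Real.rpow_nonneg Real.pi_pos.le _) _)
    (Real.rpow_nonneg hK2nn _)
  -- main estimate for all r s z
  have key : ∀ r s : ℝ, 0 < r → 0 < s → ∀ z : EuclideanSpace ℝ (Fin d),
      (r * s) ^ (-(d:ℝ)/2) *
        ∫ q : EuclideanSpace ℝ (Fin d) × EuclideanSpace ℝ (Fin d),
          ‖b q.1 - b q.2‖ ^ 2 * Real.exp (-‖q.1 - z‖ ^ 2 / s) *
            Real.exp (-‖q.2 - q.1‖ ^ 2 / r)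
      ≤ C2 * I ^ (2/p) * s ^ (-(d:ℝ)/p) * r ^ θ := by
    intro r s hr hs z
    have h := core d hd p θ hp2 hθ b hb r s hr hs z
    have hpos : (0:ℝ) < (r*s) ^ (-(d:ℝ)/2) := Real.rpow_pos_of_pos (mul_pos hr hs) _
    refine (mul_le_mul_of_nonneg_left h hpos.le).trans (le_of_eq ?_)
    have e_split : ((Real.pi * s) ^ ((d:ℝ)/2) *
        (r ^ (((d:ℝ) + a)/2) * K2)) ^ ((p-2)/p)
        = (Real.pi ^ ((d:ℝ)/2)) ^ ((p-2)/p) * s ^ (((d:ℝ)/2) * ((p-2)/p)) *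
          (r ^ ((((d:ℝ) + a)/2) * ((p-2)/p)) * K2 ^ ((p-2)/p)) := by
      rw [Real.mul_rpow Real.pi_pos.le hs.le,
        Real.mul_rpow (by positivity) (mul_nonneg (Real.rpow_nonneg hr.le _) hK2nn),
        Real.mul_rpow (by positivity) (by positivity),
        Real.mul_rpow (Real.rpow_nonneg hr.le _) hK2nn,
        ← Real.rpow_mul hs.le, ← Real.rpow_mul hr.le]
    have e_rs : (r*s) ^ (-(d:ℝ)/2) = r ^ (-(d:ℝ)/2) * s ^ (-(d:ℝ)/2) :=
      Real.mul_rpow hr.le hs.le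
    have e_s : s ^ (-(d:ℝ)/2) * s ^ (((d:ℝ)/2) * ((p-2)/p)) = s ^ (-(d:ℝ)/p) := by
      rw [← Real.rpow_add hs]; congr 1; field_simp; ring
    have e_r : r ^ (-(d:ℝ)/2) * r ^ ((((d:ℝ) + a)/2) * ((p-2)/p)) = r ^ θ := by
      rw [← Real.rpow_add hr]; congr 1; rw [ha_def]; field_simp; ring
    calc (r*s) ^ (-(d:ℝ)/2) * (I ^ (2/p) *
          ((Real.pi * s) ^ ((d:ℝ)/2) * (r ^ (((d:ℝ) + a)/2) * K2)) ^ ((p-2)/p))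
        = (s ^ (-(d:ℝ)/2) * s ^ (((d:ℝ)/2) * ((p-2)/p))) *
          (r ^ (-(d:ℝ)/2) * r ^ ((((d:ℝ) + a)/2) * ((p-2)/p))) *
          ((Real.pi ^ ((d:ℝ)/2)) ^ ((p-2)/p) * K2 ^ ((p-2)/p)) * I ^ (2/p) := by
          rw [e_split, e_rs]; ring
      _ = C2 * I ^ (2/p) * s ^ (-(d:ℝ)/p) * r ^ θ := by
          rw [e_s, e_r, hC2_def]; ring
  by_cases hI : I = 0
  · refine ⟨1, one_pos, fun r s hr hs z => ?_⟩
    have h := key r s hr hs z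
    rw [hI] at h
    rw [hI]
    rw [Real.zero_rpow (by positivity : (2/p : ℝ) ≠ 0)] at h
    rw [Real.zero_rpow (by positivity : (1/p : ℝ) ≠ 0),
      Real.zero_rpow (by positivity : (2/p : ℝ) ≠ 0)]
    calc _ ≤ C2 * 0 * s ^ (-(d:ℝ)/p) * r ^ θ := h
      _ = 1 * 0 * s ^ (-(d:ℝ)/p) * r ^ θ := by ring
  · have hIpos : 0 < I := lt_of_le_of_ne hI0 (Ne.symm hI)
    have hden : (0:ℝ) < (I ^ (1/p)) ^ (2/p) :=
      Real.rpow_pos_of_pos (Real.rpow_pos_of_pos hIpos _) _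
    refine ⟨(max C2 1) * I ^ (2/p) / ((I ^ (1/p)) ^ (2/p)), ?_, fun r s hr hs z => ?_⟩
    · apply div_pos (mul_pos (lt_of_lt_of_le one_pos (le_max_right _ _))
        (Real.rpow_pos_of_pos hIpos _)) hden
    · have h := key r s hr hs z
      rw [div_mul_cancel₀ _ hden.ne']
      refine h.trans ?_
      have h1 : C2 ≤ max C2 1 := le_max_left _ _
      have h2 : (0:ℝ) ≤ I ^ (2/p) * (s ^ (-(d:ℝ)/p) * r ^ θ) := by positivity
      nlinarith [Real.rpow_pos_of_pos hIpos (2/p), Real.rpow_pos_of_pos hs (-(d:ℝ)/p),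
        Real.rpow_pos_of_pos hr θ]
end

section
/- For the one-dimensional indicator f = 𝟙_{[a,b]} with 0 < a < b, there is a constant C > 0 such that (rs)^{−1/2} ∫_{ℝ²} |f(x)−f(y)|² e^{−|x−z|²/s} e^{−|y−x|²/r} dy dx ≤ C s^{−1/2} r^{1/2} for all r, s > 0 and z ∈ ℝ; hence f ∈ GB²_{1/2,1/2}(ℝ). -/
open MeasureTheory

set_option maxHeartbeats 1000000

private lemma straddle_aux {a b x y : ℝ}
    (h : (x ∈ Set.Icc a b ∧ y ∉ Set.Icc a b) ∨ (x ∉ Set.Icc a b ∧ y ∈ Set.Icc a b)) :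
    (x - a) ^ 2 ≤ (y - x) ^ 2 ∨ (x - b) ^ 2 ≤ (y - x) ^ 2 := by
  simp only [Set.mem_Icc, not_and_or, not_le] at h
  rcases h with ⟨⟨h1, h2⟩, h3 | h3⟩ | ⟨h1 | h1, h2, h3⟩
  · left; nlinarith
  · right; nlinarith
  · left; nlinarith
  · right; nlinarith

private lemma mixed_bound {r s x y z a b : ℝ} (hr : 0 < r) (hs : 0 < s)
    (hc : (x - a) ^ 2 ≤ (y - x) ^ 2 ∨ (x - b) ^ 2 ≤ (y - x) ^ 2) :
    Real.exp (-(x - z) ^ 2 / s) * Real.exp (-(y - x) ^ 2 / r) ≤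
      (Real.exp (-(x - a) ^ 2 / (2 * r)) + Real.exp (-(x - b) ^ 2 / (2 * r))) *
        Real.exp (-(y - x) ^ 2 / (2 * r)) := by
  have h2r : (0:ℝ) < 2 * r := by linarith
  have key : ∀ c : ℝ, (x - c) ^ 2 ≤ (y - x) ^ 2 →
      Real.exp (-(y - x) ^ 2 / r) ≤
        Real.exp (-(x - c) ^ 2 / (2 * r)) * Real.exp (-(y - x) ^ 2 / (2 * r)) := by
    intro c hcle
    rw [← Real.exp_add, Real.exp_le_exp, ← add_div, div_le_div_iff₀ hr h2r]
    nlinarith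
  have hs1 : Real.exp (-(x - z) ^ 2 / s) ≤ 1 := by
    apply Real.exp_le_one_iff.2
    apply div_nonpos_of_nonpos_of_nonneg (neg_nonpos.2 (sq_nonneg _)) hs.le
  have h0 : Real.exp (-(x - z) ^ 2 / s) * Real.exp (-(y - x) ^ 2 / r) ≤
      Real.exp (-(y - x) ^ 2 / r) := by
    calc Real.exp (-(x - z) ^ 2 / s) * Real.exp (-(y - x) ^ 2 / r)
        ≤ 1 * Real.exp (-(y - x) ^ 2 / r) :=
          mul_le_mul_of_nonneg_right hs1 (Real.exp_nonneg _)
      _ = Real.exp (-(y - x) ^ 2 / r) := one_mul _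
  refine h0.trans ?_
  rcases hc with hc | hc
  · refine (key a hc).trans ?_
    apply mul_le_mul_of_nonneg_right _ (Real.exp_nonneg _)
    nlinarith [Real.exp_nonneg (-(x - b) ^ 2 / (2 * r))]
  · refine (key b hc).trans ?_
    apply mul_le_mul_of_nonneg_right _ (Real.exp_nonneg _)
    nlinarith [Real.exp_nonneg (-(x - a) ^ 2 / (2 * r))]

theorem stmt19 (a b : ℝ) (ha : 0 < a) (hab : a < b) (f : ℝ → ℝ)
    (hf : f = Set.indicator (Set.Icc a b) 1) :
    ∃ C > 0, ∀ r s : ℝ, 0 < r → 0 < s → ∀ z : ℝ,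
      (r * s) ^ (-(1:ℝ)/2) *
        ∫ q : ℝ × ℝ, (f q.1 - f q.2) ^ 2 * Real.exp (-(q.1 - z) ^ 2 / s) *
          Real.exp (-(q.2 - q.1) ^ 2 / r)
      ≤ C * s ^ (-(1:ℝ)/2) * r ^ ((1:ℝ)/2) := by
  refine ⟨4 * Real.pi, by positivity, ?_⟩
  intro r s hr hs z
  have h2r : (0:ℝ) < 2 * r := by linarith
  set F : ℝ → ℝ := fun x => Real.exp (-(x - a) ^ 2 / (2 * r)) +
      Real.exp (-(x - b) ^ 2 / (2 * r)) with hFdef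
  set G : ℝ → ℝ := fun u => Real.exp (-u ^ 2 / (2 * r)) with hGdef
  have hbase : Integrable (fun x : ℝ => Real.exp (-(1 / (2 * r)) * x ^ 2)) :=
    integrable_exp_neg_mul_sq (by positivity)
  have hexp_eq : ∀ c x : ℝ, Real.exp (-(x - c) ^ 2 / (2 * r)) =
      (fun t : ℝ => Real.exp (-(1 / (2 * r)) * t ^ 2)) (x - c) := by
    intro c x; simp only; ring_nf
  have hint_shift : ∀ c : ℝ, Integrable (fun x : ℝ => Real.exp (-(x - c) ^ 2 / (2 * r))) := by
    intro c
    refine (hbase.comp_sub_right c).congr (Filter.Eventually.of_forall fun x => ?_)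
    exact (hexp_eq c x).symm
  have hGauss : ∀ c : ℝ, (∫ x : ℝ, Real.exp (-(x - c) ^ 2 / (2 * r)))
      = Real.sqrt (Real.pi * (2 * r)) := by
    intro c
    have h1 : (∫ x : ℝ, Real.exp (-(x - c) ^ 2 / (2 * r)))
        = ∫ x : ℝ, Real.exp (-(1 / (2 * r)) * x ^ 2) := by
      rw [← integral_sub_right_eq_self (fun t : ℝ => Real.exp (-(1 / (2 * r)) * t ^ 2)) c]
      exact integral_congr_ae (Filter.Eventually.of_forall fun x => hexp_eq c x)
    rw [h1, integral_gaussian]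
    congr 1
    field_simp
  have hFint : Integrable F := (hint_shift a).add (hint_shift b)
  have hGint : Integrable G := by
    refine (hint_shift 0).congr (Filter.Eventually.of_forall fun x => ?_)
    simp [hGdef]
  set g : ℝ × ℝ → ℝ := fun q => F q.1 * G (q.2 - q.1) with hgdef
  have hT : MeasurePreserving (fun q : ℝ × ℝ => (q.1, q.2 - q.1))
      ((volume : Measure ℝ).prod volume) ((volume : Measure ℝ).prod volume) :=
    measurePreserving_prod_sub volume volume
  have hTemb : MeasurableEmbedding (fun q : ℝ × ℝ => (q.1, q.2 - q.1)) :=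
    (MeasurableEquiv.shearSubRight ℝ).measurableEmbedding
  have hH : Integrable (fun q : ℝ × ℝ => F q.1 * G q.2)
      ((volume : Measure ℝ).prod volume) := hFint.mul_prod hGint
  have hgint : Integrable g := by
    rw [Measure.volume_eq_prod]
    exact (hT.integrable_comp_emb hTemb).2 hH
  have hgval' : (∫ q : ℝ × ℝ, g q) = 4 * Real.pi * r := by
    rw [Measure.volume_eq_prod]
    have h2 : (∫ q : ℝ × ℝ, g q ∂((volume : Measure ℝ).prod volume))
        = ∫ q : ℝ × ℝ, F q.1 * G q.2 ∂((volume : Measure ℝ).prod volume) :=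
      hT.integral_comp hTemb (fun q : ℝ × ℝ => F q.1 * G q.2)
    rw [h2, integral_prod_mul]
    have hFi : (∫ x : ℝ, F x) = 2 * Real.sqrt (Real.pi * (2 * r)) := by
      rw [hFdef, integral_add (hint_shift a) (hint_shift b), hGauss a, hGauss b]; ring
    have hGi : (∫ u : ℝ, G u) = Real.sqrt (Real.pi * (2 * r)) := by
      have h3 : (∫ u : ℝ, G u) = ∫ u : ℝ, Real.exp (-(u - 0) ^ 2 / (2 * r)) := by
        refine integral_congr_ae (Filter.Eventually.of_forall fun u => ?_)
        simp [hGdef]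
      rw [h3, hGauss 0]
    rw [hFi, hGi, mul_assoc, Real.mul_self_sqrt (by positivity)]
    ring
  have hpt : ∀ q : ℝ × ℝ, (f q.1 - f q.2) ^ 2 * Real.exp (-(q.1 - z) ^ 2 / s) *
      Real.exp (-(q.2 - q.1) ^ 2 / r) ≤ g q := by
    rintro ⟨x, y⟩
    simp only [hgdef]
    by_cases hx : x ∈ Set.Icc a b <;> by_cases hy : y ∈ Set.Icc a b
    · have h0 : f x - f y = 0 := by
        simp [hf, Set.indicator_of_mem hx, Set.indicator_of_mem hy]
      rw [h0, show ((0:ℝ)) ^ 2 * Real.exp (-(x - z) ^ 2 / s) *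
        Real.exp (-(y - x) ^ 2 / r) = 0 from by ring]
      positivity
    · have hd : (f x - f y) ^ 2 = 1 := by
        simp [hf, Set.indicator_of_mem hx, Set.indicator_of_notMem hy]
      rw [hd, one_mul]
      exact mixed_bound hr hs (straddle_aux (Or.inl ⟨hx, hy⟩))
    · have hd : (f x - f y) ^ 2 = 1 := by
        simp [hf, Set.indicator_of_notMem hx, Set.indicator_of_mem hy]
      rw [hd, one_mul]
      exact mixed_bound hr hs (straddle_aux (Or.inr ⟨hx, hy⟩))
    · have h0 : f x - f y = 0 := by
        simp [hf, Set.indicator_of_notMem hx, Set.indicator_of_notMem hy]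
      rw [h0, show ((0:ℝ)) ^ 2 * Real.exp (-(x - z) ^ 2 / s) *
        Real.exp (-(y - x) ^ 2 / r) = 0 from by ring]
      positivity
  have hI : (∫ q : ℝ × ℝ, (f q.1 - f q.2) ^ 2 * Real.exp (-(q.1 - z) ^ 2 / s) *
      Real.exp (-(q.2 - q.1) ^ 2 / r)) ≤ 4 * Real.pi * r := by
    calc (∫ q : ℝ × ℝ, (f q.1 - f q.2) ^ 2 * Real.exp (-(q.1 - z) ^ 2 / s) *
        Real.exp (-(q.2 - q.1) ^ 2 / r)) ≤ ∫ q : ℝ × ℝ, g q := by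
          apply integral_mono_of_nonneg
          · exact Filter.Eventually.of_forall fun q => by positivity
          · exact hgint
          · exact Filter.Eventually.of_forall hpt
      _ = 4 * Real.pi * r := hgval'
  have hrs : (r * s) ^ (-(1:ℝ)/2) = r ^ (-(1:ℝ)/2) * s ^ (-(1:ℝ)/2) :=
    Real.mul_rpow hr.le hs.le
  have hpow : r ^ (-(1:ℝ)/2) * r = r ^ ((1:ℝ)/2) := by
    nth_rewrite 2 [← Real.rpow_one r]
    rw [← Real.rpow_add hr]
    norm_num
  calc (r * s) ^ (-(1:ℝ)/2) * ∫ q : ℝ × ℝ, (f q.1 - f q.2) ^ 2 *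
        Real.exp (-(q.1 - z) ^ 2 / s) * Real.exp (-(q.2 - q.1) ^ 2 / r)
      ≤ (r * s) ^ (-(1:ℝ)/2) * (4 * Real.pi * r) := by
        apply mul_le_mul_of_nonneg_left hI (Real.rpow_nonneg (by positivity) _)
    _ = 4 * Real.pi * s ^ (-(1:ℝ)/2) * r ^ ((1:ℝ)/2) := by
        rw [hrs, ← hpow]; ring
end
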